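/- Let γ : ℝ → ℝ² be a C^∞ curve with a 3/2-cusp at t = 0, and assume [γ'(t), γ''(t)] ≠ 0 for all t ≠ 0 near 0. Then there exists a C^∞ function F on a neighborhood of 0 such that F(t) = s_A(t)²·κ_A(t) for all t ≠ 0 near 0; that is, the normalized affine curvature function (s_A)²·κ_A extends to a C^∞ function of t at t = 0. -/

import Mathlib

noncomputable section
open Real Set Filter Topology MeasureTheory intervalIntegral ContDiff

/-- The determinant `[a, b] = a₁b₂ − a₂b₁` of two vectors in the plane. -/
def det2 (a b : ℝ × ℝ) : ℝ := a.1 * b.2 - a.2 * b.1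

/-- The Euclidean norm on `ℝ × ℝ`. -/
def enorm2 (a : ℝ × ℝ) : ℝ := Real.sqrt (a.1 ^ 2 + a.2 ^ 2)

/-- The Euclidean arclength parameter of `γ` based at `0`. -/
def sG (γ : ℝ → ℝ × ℝ) (t : ℝ) : ℝ := ∫ u in (0:ℝ)..t, enorm2 (deriv γ u)

/-- The affine arclength parameter of `γ` based at `0`. -/
def sA (γ : ℝ → ℝ × ℝ) (t : ℝ) : ℝ :=
  ∫ u in (0:ℝ)..t, |det2 (deriv γ u) (iteratedDeriv 2 γ u)| ^ ((1:ℝ)/3)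

/-- The Euclidean curvature `κ_g = [γ', γ'']/‖γ'‖³`. -/
def kappaG (γ : ℝ → ℝ × ℝ) (t : ℝ) : ℝ :=
  det2 (deriv γ t) (iteratedDeriv 2 γ t) / enorm2 (deriv γ t) ^ 3

/-- The affine curvature `κ_A`. -/
def kappaA (γ : ℝ → ℝ × ℝ) (t : ℝ) : ℝ :=
  (3 * det2 (deriv γ t) (iteratedDeriv 2 γ t) * det2 (deriv γ t) (iteratedDeriv 4 γ t)
    + 12 * det2 (deriv γ t) (iteratedDeriv 2 γ t)
        * det2 (iteratedDeriv 2 γ t) (iteratedDeriv 3 γ t)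
    - 5 * det2 (deriv γ t) (iteratedDeriv 3 γ t) ^ 2)
  / (9 * |det2 (deriv γ t) (iteratedDeriv 2 γ t)| ^ ((8:ℝ)/3))

/-- `γ` has a 3/2-cusp at `t = 0`. -/
def HasCusp (γ : ℝ → ℝ × ℝ) : Prop :=
  deriv γ 0 = 0 ∧ det2 (iteratedDeriv 2 γ 0) (iteratedDeriv 3 γ 0) ≠ 0

/-- The Euclidean cuspidal curvature at a 3/2-cusp `t = 0`. -/
def muG (γ : ℝ → ℝ × ℝ) : ℝ :=
  det2 (iteratedDeriv 2 γ 0) (iteratedDeriv 3 γ 0) / enorm2 (iteratedDeriv 2 γ 0) ^ ((5:ℝ)/2)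

/-- The affine cuspidal curvature at a 3/2-cusp `t = 0`. -/
def muA (γ : ℝ → ℝ × ℝ) : ℝ :=
  (24 * det2 (iteratedDeriv 2 γ 0) (iteratedDeriv 3 γ 0)
      * det2 (iteratedDeriv 2 γ 0) (iteratedDeriv 5 γ 0)
   + 60 * det2 (iteratedDeriv 2 γ 0) (iteratedDeriv 3 γ 0)
      * det2 (iteratedDeriv 3 γ 0) (iteratedDeriv 4 γ 0)
   - 35 * det2 (iteratedDeriv 2 γ 0) (iteratedDeriv 4 γ 0) ^ 2)
  / |det2 (iteratedDeriv 2 γ 0) (iteratedDeriv 3 γ 0)| ^ ((12:ℝ)/5)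

/-- `γ` (regular at `0`) has a generic inflection point at `t = 0`. -/
def HasGenericInflection (γ : ℝ → ℝ × ℝ) : Prop :=
  deriv γ 0 ≠ 0 ∧ det2 (deriv γ 0) (iteratedDeriv 2 γ 0) = 0 ∧
    det2 (deriv γ 0) (iteratedDeriv 3 γ 0) ≠ 0

/-- The affine inflectional curvature at a generic inflection point `t = 0`. -/
def muI (γ : ℝ → ℝ × ℝ) : ℝ :=
  Real.sign (det2 (deriv γ 0) (iteratedDeriv 3 γ 0)) *
    (det2 (deriv γ 0) (iteratedDeriv 4 γ 0)
      - 6 * det2 (iteratedDeriv 2 γ 0) (iteratedDeriv 3 γ 0))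
  / |det2 (deriv γ 0) (iteratedDeriv 3 γ 0)| ^ ((5:ℝ)/4)

/-- The affine map `x ↦ Ax + v` on the plane, with `A = (a b; c d)`. -/
def applyAff (a b c d : ℝ) (v : ℝ × ℝ) (p : ℝ × ℝ) : ℝ × ℝ :=
  (a * p.1 + b * p.2 + v.1, c * p.1 + d * p.2 + v.2)



variable {E : Type*} [NormedAddCommGroup E] [NormedSpace ℝ E] [CompleteSpace E]

lemma key_hasDerivAt (c : ℝ → ℝ) (w : ℝ → E) (hc : Continuous c) (hw : ContDiff ℝ ∞ w)
    (t₀ : ℝ) :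
    HasDerivAt (fun t => ∫ v in (0:ℝ)..1, c v • w (t * v))
      (∫ v in (0:ℝ)..1, (v * c v) • deriv w (t₀ * v)) t₀ := by
  have hw' : Continuous (deriv w) := hw.continuous_deriv (by norm_num)
  obtain ⟨M, hM⟩ := (isCompact_Icc (a := -(|t₀|+1)) (b := |t₀|+1)).exists_bound_of_continuousOn
    hw'.continuousOn
  obtain ⟨C, hC⟩ := (isCompact_Icc (a := (0:ℝ)) (b := 1)).exists_bound_of_continuousOn
    hc.continuousOn
  have key := intervalIntegral.hasDerivAt_integral_of_dominated_loc_of_deriv_le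
    (F := fun x v => c v • w (x * v)) (F' := fun x v => (v * c v) • deriv w (x * v))
    (x₀ := t₀) (a := (0:ℝ)) (b := 1) (μ := volume) (bound := fun _ => |M| * |C|)
    (s := Metric.ball t₀ 1) (Metric.ball_mem_nhds _ one_pos)
    (Eventually.of_forall fun x =>
      ((hc.smul (hw.continuous.comp (continuous_const.mul continuous_id))).aestronglyMeasurable))
    (((hc.smul (hw.continuous.comp (continuous_const.mul continuous_id)))).intervalIntegrable _ _)
    ((((continuous_id.mul hc).smul (hw'.comp (continuous_const.mul continuous_id)))).aestronglyMeasurable)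
    ?_ (intervalIntegrable_const) ?_
  · exact key.2
  · refine Eventually.of_forall fun v hv x hx => ?_
    rw [uIoc_of_le (by norm_num : (0:ℝ) ≤ 1)] at hv
    have hv0 : 0 < v := hv.1
    have hv1 : v ≤ 1 := hv.2
    have hxv : x * v ∈ Icc (-(|t₀|+1)) (|t₀|+1) := by
      have hxb : |x| ≤ |t₀| + 1 := by
        have := mem_ball_iff_norm.mp hx
        have : |x - t₀| < 1 := this
        calc |x| = |x - t₀ + t₀| := by ring_nf
          _ ≤ |x - t₀| + |t₀| := abs_add_le _ _
          _ ≤ |t₀| + 1 := by linarith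
      have : |x * v| ≤ |t₀| + 1 := by
        rw [abs_mul]
        calc |x| * |v| ≤ (|t₀|+1) * 1 := by
              apply mul_le_mul hxb (by rw [abs_of_pos hv0]; exact hv1) (abs_nonneg _) (by positivity)
          _ = |t₀| + 1 := by ring
      exact abs_le.mp this |> fun ⟨h1, h2⟩ => ⟨h1, h2⟩
    rw [norm_smul]
    have h1 : ‖deriv w (x*v)‖ ≤ |M| := le_trans (hM _ hxv) (le_abs_self M)
    have h2 : ‖v * c v‖ ≤ |C| := by
      rw [norm_mul]
      have := hC v ⟨hv0.le, hv1⟩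
      calc ‖v‖ * ‖c v‖ ≤ 1 * |C| := by
            apply mul_le_mul _ (le_trans this (le_abs_self C)) (norm_nonneg _) (by positivity)
            rw [Real.norm_eq_abs, abs_of_pos hv0]; exact hv1
        _ = |C| := one_mul _
    calc ‖v * c v‖ * ‖deriv w (x*v)‖ ≤ |C| * |M| :=
          mul_le_mul h2 h1 (norm_nonneg _) (abs_nonneg _)
      _ = |M| * |C| := mul_comm _ _
  · refine Eventually.of_forall fun v _ x _ => ?_
    have h1 : HasDerivAt (fun x : ℝ => x * v) v x := hasDerivAt_mul_const v
    have h2 : HasDerivAt w (deriv w (x * v)) (x * v) :=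
      (hw.differentiable (by norm_num) (x*v)).hasDerivAt
    have h3 := (h2.scomp x h1).const_smul (c v)
    convert h3 using 1
    · rfl
    · rw [smul_smul, mul_comm]

lemma parCD (n : ℕ) : ∀ (c : ℝ → ℝ) (w : ℝ → E), Continuous c → ContDiff ℝ ∞ w →
    ContDiff ℝ (n : WithTop ℕ∞) (fun t => ∫ v in (0:ℝ)..1, c v • w (t * v)) := by
  induction n with
  | zero =>
    intro c w hc hw
    rw [show ((0:ℕ) : WithTop ℕ∞) = 0 from rfl, contDiff_zero]
    exact Differentiable.continuous (fun t => (key_hasDerivAt c w hc hw t).differentiableAt)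
  | succ n ih =>
    intro c w hc hw
    rw [show ((n+1:ℕ) : WithTop ℕ∞) = (n : WithTop ℕ∞) + 1 by norm_cast, contDiff_succ_iff_deriv]
    refine ⟨fun t => (key_hasDerivAt c w hc hw t).differentiableAt, by simp, ?_⟩
    have hd : deriv (fun t => ∫ v in (0:ℝ)..1, c v • w (t * v))
        = fun t => ∫ v in (0:ℝ)..1, (v * c v) • deriv w (t * v) :=
      funext fun t => (key_hasDerivAt c w hc hw t).deriv
    rw [hd]
    exact ih (fun v => v * c v) (deriv w) (continuous_id.mul hc)
      (contDiff_infty_iff_deriv.mp hw).2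

lemma parCD_top (c : ℝ → ℝ) (w : ℝ → E) (hc : Continuous c) (hw : ContDiff ℝ ∞ w) :
    ContDiff ℝ ∞ (fun t => ∫ v in (0:ℝ)..1, c v • w (t * v)) :=
  contDiff_infty.mpr fun n => parCD n c w hc hw

lemma hadamard (f : ℝ → E) (hf : ContDiff ℝ ∞ f) (h0 : f 0 = 0) :
    ∃ a : ℝ → E, ContDiff ℝ ∞ a ∧ ∀ t, f t = t • a t := by
  refine ⟨fun t => ∫ s in (0:ℝ)..1, (1:ℝ) • deriv f (t * s),
    parCD_top _ _ continuous_const (contDiff_infty_iff_deriv.mp hf).2, fun t => ?_⟩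
  simp only [one_smul]
  have h2 := intervalIntegral.smul_integral_comp_mul_left (f := deriv f) (a := (0:ℝ)) (b := 1) t
  rw [mul_zero, mul_one] at h2
  rw [h2]
  rw [intervalIntegral.integral_deriv_eq_sub (fun x _ => (hf.differentiable (by norm_num) x))
    ((hf.continuous_deriv (by norm_num)).intervalIntegrable _ _), h0, sub_zero]

lemma glue (q : ℝ → ℝ) (hq : ContDiff ℝ ∞ q) (m : ℝ) (hm : 0 < m) :
    ∃ p : ℝ → ℝ, ContDiff ℝ ∞ p ∧ (∀ t, m/2 ≤ p t) ∧ ∀ t, m ≤ q t → p t = q t := by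
  set ρ : ℝ → ℝ := fun t => Real.smoothTransition (2 * q t / m - 1) with hρ
  have hρs : ContDiff ℝ ∞ ρ :=
    Real.smoothTransition.contDiff.comp (((hq.const_smul (2:ℝ)).div_const m).sub contDiff_const)
  refine ⟨fun t => ρ t * q t + (1 - ρ t) * (m/2), (hρs.mul hq).add
    ((contDiff_const.sub hρs).mul contDiff_const), fun t => ?_, fun t ht => ?_⟩
  · rcases le_or_gt (m/2) (q t) with h | h
    · have : ρ t * q t + (1 - ρ t) * (m/2) - m/2 = ρ t * (q t - m/2) := by ring
      nlinarith [Real.smoothTransition.nonneg (2 * q t / m - 1), this]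
    · have : ρ t = 0 := Real.smoothTransition.zero_of_nonpos (by
        rw [sub_nonpos, div_le_one hm]; linarith)
      simp only []; show m/2 ≤ ρ t * q t + (1 - ρ t) * (m/2); rw [this]; ring_nf; rfl
  · have : ρ t = 1 := Real.smoothTransition.one_of_one_le (by
      rw [le_sub_iff_add_le, le_div_iff₀ hm]; linarith)
    show ρ t * q t + (1 - ρ t) * (m/2) = q t; rw [this]; ring

lemma det2CD {f g : ℝ → ℝ × ℝ} (hf : ContDiff ℝ ∞ f) (hg : ContDiff ℝ ∞ g) :
    ContDiff ℝ ∞ (fun t => det2 (f t) (g t)) := by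
  simp only [det2]
  exact ((contDiff_fst.comp hf).mul (contDiff_snd.comp hg)).sub
    ((contDiff_snd.comp hf).mul (contDiff_fst.comp hg))

/-- At a 3/2-cusp (with no inflection points nearby), the normalized affine curvature
`(s_A)²·κ_A` extends to a `C^∞` function of `t` at `t = 0`. -/
theorem stmt_7 (γ : ℝ → ℝ × ℝ) (hγ : ContDiff ℝ (⊤:ℕ∞) γ) (hcusp : HasCusp γ)
    (hreg : ∀ᶠ t in 𝓝[≠] (0:ℝ), det2 (deriv γ t) (iteratedDeriv 2 γ t) ≠ 0) :
    ∃ ε > (0:ℝ), ∃ F : ℝ → ℝ, ContDiffOn ℝ (⊤:ℕ∞) F (Set.Ioo (-ε) ε) ∧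
      ∀ t ∈ Set.Ioo (-ε) ε, t ≠ 0 → F t = sA γ t ^ 2 * kappaA γ t := by
  have hγ' : ContDiff ℝ ∞ (deriv γ) := (contDiff_infty_iff_deriv.mp hγ).2
  obtain ⟨a, ha, hfa⟩ := hadamard (deriv γ) hγ' hcusp.1
  set b : ℝ → ℝ × ℝ := deriv a with hbdef
  have hab : ContDiff ℝ ∞ b := (contDiff_infty_iff_deriv.mp ha).2
  set b2 : ℝ → ℝ × ℝ := deriv b with hb2def
  have hab2 : ContDiff ℝ ∞ b2 := (contDiff_infty_iff_deriv.mp hab).2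
  set b3 : ℝ → ℝ × ℝ := deriv b2 with hb3def
  have hab3 : ContDiff ℝ ∞ b3 := (contDiff_infty_iff_deriv.mp hab2).2
  have hda : ∀ t, HasDerivAt a (b t) t := fun t => (ha.differentiable (by norm_num) t).hasDerivAt
  have hdb : ∀ t, HasDerivAt b (b2 t) t := fun t => (hab.differentiable (by norm_num) t).hasDerivAt
  have hdb2 : ∀ t, HasDerivAt b2 (b3 t) t :=
    fun t => (hab2.differentiable (by norm_num) t).hasDerivAt
  set A2 : ℝ → ℝ × ℝ := fun t => a t + t • b t with hA2def
  set A3 : ℝ → ℝ × ℝ := fun t => (2:ℝ) • b t + t • b2 t with hA3def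
  set A4 : ℝ → ℝ × ℝ := fun t => (3:ℝ) • b2 t + t • b3 t with hA4def
  have hA2s : ContDiff ℝ ∞ A2 := ha.add (contDiff_id.smul hab)
  have hA3s : ContDiff ℝ ∞ A3 := ((contDiff_const (c := (2:ℝ))).smul hab).add (contDiff_id.smul hab2)
  have hA4s : ContDiff ℝ ∞ A4 := ((contDiff_const (c := (3:ℝ))).smul hab2).add (contDiff_id.smul hab3)
  have hfa' : deriv γ = fun t => t • a t := funext hfa
  have hd2 : ∀ t, HasDerivAt (deriv γ) (A2 t) t := by
    intro t
    rw [hfa']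
    have := (hasDerivAt_id t).smul (hda t)
    convert this using 1 <;> try rfl
    try simp [hA2def]
    module
  have eq2 : ∀ t, iteratedDeriv 2 γ t = A2 t := by
    intro t
    rw [show (2:ℕ) = 1 + 1 from rfl, iteratedDeriv_succ, iteratedDeriv_one]
    exact (hd2 t).deriv
  have eq2' : iteratedDeriv 2 γ = A2 := funext eq2
  have hd3 : ∀ t, HasDerivAt A2 (A3 t) t := by
    intro t
    have h1 := (hasDerivAt_id t).smul (hdb t)
    have := (hda t).add h1
    convert this using 1 <;> try rfl
    try simp [hA3def]
    module
  have eq3 : ∀ t, iteratedDeriv 3 γ t = A3 t := by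
    intro t
    rw [show (3:ℕ) = 2 + 1 from rfl, iteratedDeriv_succ, eq2']
    exact (hd3 t).deriv
  have eq3' : iteratedDeriv 3 γ = A3 := funext eq3
  have hd4 : ∀ t, HasDerivAt A3 (A4 t) t := by
    intro t
    have h1 := (hasDerivAt_id t).smul (hdb2 t)
    have := ((hdb t).const_smul (2:ℝ)).add h1
    convert this using 1 <;> try rfl
    try simp [hA4def]
    module
  have eq4 : ∀ t, iteratedDeriv 4 γ t = A4 t := by
    intro t
    rw [show (4:ℕ) = 3 + 1 from rfl, iteratedDeriv_succ, eq3']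
    exact (hd4 t).deriv
  set h : ℝ → ℝ := fun t => det2 (a t) (b t) with hhdef
  have hhs : ContDiff ℝ ∞ h := det2CD ha hab
  have h0ne : h 0 ≠ 0 := by
    have hkey : det2 (iteratedDeriv 2 γ 0) (iteratedDeriv 3 γ 0) = 2 * h 0 := by
      rw [eq2 0, eq3 0]
      simp [hA2def, hA3def, hhdef, det2]
      ring
    intro hc0
    apply hcusp.2
    rw [hkey, hc0, mul_zero]
  -- the basic determinant factorization
  have hDf : ∀ u, det2 (deriv γ u) (iteratedDeriv 2 γ u) = u^2 * h u := by
    intro u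
    rw [hfa u, eq2 u]
    simp [hA2def, hhdef, det2, Prod.smul_fst, Prod.smul_snd, smul_eq_mul]
    ring
  -- choose ε
  obtain ⟨ε, hε, hball⟩ := Metric.continuousAt_iff.mp hhs.continuous.continuousAt (|h 0|/2)
    (by positivity)
  have habs : ∀ t, |t| < ε → |h 0|/2 ≤ |h t| := by
    intro t ht
    have h1 := hball (show dist t 0 < ε by simpa [Real.dist_eq] using ht)
    rw [Real.dist_eq] at h1
    have h2 := abs_sub_abs_le_abs_sub (h 0) (h t)
    rw [abs_sub_comm] at h2
    linarith
  set m : ℝ := (h 0)^2 / 4 with hmdef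
  have hm : 0 < m := by positivity
  obtain ⟨p, hp, hpm, hpq⟩ := glue (fun t => h t ^ 2) (hhs.pow 2) m hm
  set w : ℝ → ℝ := fun u => p u ^ ((1:ℝ)/6) with hwdef
  have hppos : ∀ u, 0 < p u := fun u => lt_of_lt_of_le (by positivity) (hpm u)
  have hw : ContDiff ℝ ∞ w := contDiff_iff_contDiffAt.mpr fun t =>
    hp.contDiffAt.rpow_const_of_ne (hppos t).ne'
  have hwpos : ∀ u, 0 < w u := fun u => Real.rpow_pos_of_pos (hppos u) _
  have hweq : ∀ u, |u| < ε → w u = |h u| ^ ((1:ℝ)/3) := by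
    intro u hu
    have h1 : p u = h u ^ 2 := by
      apply hpq
      have := habs u hu
      rw [hmdef, ← sq_abs (h u), ← sq_abs (h 0)]
      nlinarith [abs_nonneg (h 0)]
    rw [hwdef]
    simp only []
    rw [h1, ← sq_abs, ← Real.rpow_natCast |h u| 2, ← Real.rpow_mul (abs_nonneg _)]
    norm_num
  set G : ℝ → ℝ := fun t => ∫ v in (0:ℝ)..1, (v ^ ((2:ℝ)/3)) • w (t * v) with hGdef
  have hGs : ContDiff ℝ ∞ G := parCD_top _ _ (Real.continuous_rpow_const (by norm_num)) hw
  set M : ℝ → ℝ := fun t => 3 * (t * h t) * det2 (a t) (A4 t)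
      + 12 * h t * det2 (A2 t) (A3 t) - 5 * det2 (a t) (A3 t)^2 with hMdef
  have hMs : ContDiff ℝ ∞ M :=
    (((contDiff_const.mul (contDiff_id.mul hhs)).mul (det2CD ha hA4s)).add
      ((contDiff_const.mul hhs).mul (det2CD hA2s hA3s))).sub
      (contDiff_const.mul ((det2CD ha hA3s).pow 2))
  refine ⟨ε, hε, fun t => G t ^ 2 * M t / (9 * w t ^ 8),
    (hGs.pow 2 |>.mul hMs).div (contDiff_const.mul (hw.pow 8))
      (fun t => by have := hwpos t; positivity) |>.contDiffOn, ?_⟩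
  intro t ht htne
  have htε : |t| < ε := abs_lt.mpr ⟨by linarith [ht.1], by linarith [ht.2]⟩
  have hX : (0:ℝ) < |t| := abs_pos.mpr htne
  -- sA computation
  have hsa : sA γ t = t * (|t| ^ ((2:ℝ)/3) * G t) := by
    have hint : (fun u => |det2 (deriv γ u) (iteratedDeriv 2 γ u)| ^ ((1:ℝ)/3))
        = fun u => |u^2 * h u| ^ ((1:ℝ)/3) := funext fun u => by rw [hDf u]
    rw [sA, hint]
    have h2 := intervalIntegral.smul_integral_comp_mul_left
      (f := fun u => |u^2 * h u| ^ ((1:ℝ)/3)) (a := (0:ℝ)) (b := 1) t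
    rw [mul_zero, mul_one] at h2
    rw [← h2, smul_eq_mul]
    congr 1
    have hcong : EqOn (fun v => |(t*v)^2 * h (t*v)| ^ ((1:ℝ)/3))
        (fun v => |t| ^ ((2:ℝ)/3) * (v ^ ((2:ℝ)/3) * w (t*v))) (uIcc (0:ℝ) 1) := by
      intro v hv
      rw [uIcc_of_le (zero_le_one)] at hv
      have hv0 : (0:ℝ) ≤ v := hv.1
      have hv1 : v ≤ 1 := hv.2
      have htv : |t*v| < ε := by
        rw [abs_mul, abs_of_nonneg hv0]
        calc |t| * v ≤ |t| * 1 := by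
              exact mul_le_mul_of_nonneg_left hv1 (abs_nonneg t)
          _ = |t| := mul_one _
          _ < ε := htε
      simp only []
      rw [hweq _ htv, abs_mul, abs_of_nonneg (sq_nonneg _),
        Real.mul_rpow (sq_nonneg _) (abs_nonneg _)]
      have hpw : ((t*v)^2) ^ ((1:ℝ)/3) = |t| ^ ((2:ℝ)/3) * v ^ ((2:ℝ)/3) := by
        rw [mul_pow, ← sq_abs t, Real.mul_rpow (by positivity) (by positivity)]
        congr 1
        · rw [← Real.rpow_natCast |t| 2, ← Real.rpow_mul (abs_nonneg t)]; norm_num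
        · rw [← Real.rpow_natCast v 2, ← Real.rpow_mul hv0]; norm_num
      rw [hpw]; ring
    rw [intervalIntegral.integral_congr hcong, intervalIntegral.integral_const_mul]
    simp only [hGdef, smul_eq_mul]
  -- numerator factorization
  have hNf : 3 * det2 (deriv γ t) (iteratedDeriv 2 γ t) * det2 (deriv γ t) (iteratedDeriv 4 γ t)
      + 12 * det2 (deriv γ t) (iteratedDeriv 2 γ t)
          * det2 (iteratedDeriv 2 γ t) (iteratedDeriv 3 γ t)
      - 5 * det2 (deriv γ t) (iteratedDeriv 3 γ t) ^ 2 = t^2 * M t := by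
    rw [hfa t, eq2 t, eq3 t, eq4 t]
    simp [hMdef, hA2def, hA3def, hA4def, hhdef, det2, Prod.smul_fst, Prod.smul_snd, smul_eq_mul]
    ring
  -- denominator
  have hden : |det2 (deriv γ t) (iteratedDeriv 2 γ t)| ^ ((8:ℝ)/3)
      = |t| ^ ((16:ℝ)/3) * w t ^ 8 := by
    rw [hDf t, abs_mul, abs_of_nonneg (sq_nonneg t),
      Real.mul_rpow (sq_nonneg t) (abs_nonneg _)]
    congr 1
    · rw [← sq_abs t, ← Real.rpow_natCast |t| 2, ← Real.rpow_mul (abs_nonneg t)]; norm_num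
    · rw [hweq t htε, ← Real.rpow_natCast (|h t| ^ ((1:ℝ)/3)) 8,
        ← Real.rpow_mul (abs_nonneg _)]
      norm_num
  rw [kappaA, hNf, hden, hsa]
  have hcomb : t ^ 2 * (|t| ^ ((2:ℝ)/3)) ^ 2 * t ^ 2 = |t| ^ ((16:ℝ)/3) := by
    rw [← sq_abs t, ← Real.rpow_natCast |t| 2, ← Real.rpow_natCast (|t| ^ ((2:ℝ)/3)) 2,
      ← Real.rpow_mul (abs_nonneg t), ← Real.rpow_add hX, ← Real.rpow_add hX]
    norm_num
  have hX163 : (0:ℝ) < |t| ^ ((16:ℝ)/3) := Real.rpow_pos_of_pos hX _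
  have hw8 : (0:ℝ) < w t ^ 8 := by have := hwpos t; positivity
  have hwt : w t ≠ 0 := (hwpos t).ne'
  field_simp
  linear_combination (-(G t ^ 2 * M t)) * hcomb
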